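/- With T_2 = t² − t and D_m = (1−t)^m·(1−t^{2m+2})/(1−t²), define D'_m by D'_1 = 1 − t³ (appropriate initial data) and the recursion D'_m = (1−t³)·D_{m-1} − T_2²·D_{m-2} for m ≥ 3. Then D'_m = (1−t)^{m−1}·(1−t^{2m+1}). -/
import Mathlib


open Polynomial

/-- With `T₂ = t² − t` and `D m = (1−t)^m (1−t^{2m+2})/(1−t²)`
(encoded by `(1−t²)·D m = (1−t)^m (1−t^{2m+2})`), if `D'` satisfies the
initial values `D' 1 = 1 − t³`, `D' 2 = (1−t)(1−t⁵)` and the recursion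
`D' m = (1−t³)·D (m−1) − T₂²·D (m−2)` for `m ≥ 3`, then
`D' m = (1−t)^{m−1}·(1−t^{2m+1})` for all `m ≥ 1`. -/
theorem stmt1 (D D' : ℕ → Polynomial ℤ)
    (hD : ∀ m, 1 ≤ m → (1 - X ^ 2) * D m = (1 - X) ^ m * (1 - X ^ (2 * m + 2)))
    (h1 : D' 1 = 1 - X ^ 3)
    (h2 : D' 2 = (1 - X) * (1 - X ^ 5))
    (hrec : ∀ m, 3 ≤ m →
      D' m = (1 - X ^ 3) * D (m - 1) - (X ^ 2 - X) ^ 2 * D (m - 2)) :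
    ∀ m, 1 ≤ m → D' m = (1 - X) ^ (m - 1) * (1 - X ^ (2 * m + 1)) := by
  intro m hm
  match m, hm with
  | 1, _ => simpa using h1
  | 2, _ => rw [h2]; ring
  | (k+3), _ =>
    have e1 := hD (k+2) (by omega)
    have e2 := hD (k+1) (by omega)
    have hr := hrec (k+3) (by omega)
    have hs1 : k+3-1 = k+2 := by omega
    have hs2 : k+3-2 = k+1 := by omega
    rw [hs1, hs2] at hr
    rw [hs1]
    have hne : (1 - X^2 : Polynomial ℤ) ≠ 0 := by
      intro h
      have := congrArg (fun p => p.coeff 0) h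
      simp at this
    apply mul_left_cancel₀ hne
    rw [hr]
    have expand : (1 - X^2 : Polynomial ℤ) * ((1 - X^3) * D (k+2) - (X^2 - X)^2 * D (k+1))
        = (1 - X^3) * ((1 - X^2) * D (k+2)) - (X^2 - X)^2 * ((1 - X^2) * D (k+1)) := by
      ring
    rw [expand, e1, e2]
    ring
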